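/- Let (T, 𝒯, Leb) be a probability parameter space, (Σ, μ) a probability space, and π^t : Σ → ℝ measurable maps jointly measurable in (t, θ). Suppose {A_β}_β is a countable measurable partition-like family of Σ × Σ (indexed by words β of all lengths n ≥ 0), constants C > 0, 0 < λ < 1, x > 0, c > 1, and a function w : words → (0,∞) such that: (i) for (θ,τ) ∈ A_β with |β| = n, Leb{t : |π^t(θ) − π^t(τ)| ≤ r} ≤ C·r / w(β)^{1+ε₀/4} for all r > 0; (ii) w(β)^{1+ε₀/4} ≥ c^{-1+x}·λ^{-nx}·μ(β) for |β| = n, where μ(β) denotes the μ⊗μ-mass factor μ(A_β) ≤ μ(β)·μ(β) relative to cylinder measures with A_β ⊆ β × β. Then liminf_{r→0} (1/2r)·∫_T ∫_Σ μ{τ : |π^t(θ) − π^t(τ)| ≤ r} dμ(θ) dt ≤ (C/2)·c^{x−1}·∑_{n≥0} λ^{nx} < ∞. -/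
import Mathlib


open MeasureTheory Filter

/-- Core estimate of the Simon–Solomyak–Urbański-type argument: under the
transversality condition (i) and the Gibbs bound (ii), the lim inf as `r → 0⁺` of
`(1/2r) ∫∫ μ{τ : |π^t(θ) − π^t(τ)| ≤ r} dμ(θ) dt` is at most
`(C/2) c^{x−1} ∑_{n ≥ 0} λ^{n x} < ∞`. -/
theorem stmt6 {T Y B : Type*} [MeasurableSpace T] [MeasurableSpace Y] [Countable B]
    (LebT : Measure T) [IsProbabilityMeasure LebT]
    (μ : Measure Y) [IsProbabilityMeasure μ]
    (π : T → Y → ℝ) (hπ : Measurable (Function.uncurry π))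
    (A : B → Set (Y × Y)) (hA : ∀ β, MeasurableSet (A β))
    (len : B → ℕ) (w : B → ℝ) (hw : ∀ β, 0 < w β)
    (mc : B → ENNReal)
    (C c lam x ε₀ : ℝ) (hC : 0 < C) (hc : 1 < c)
    (hlam0 : 0 < lam) (hlam1 : lam < 1) (hx : 0 < x) (hε : 0 < ε₀)
    (hatomless : ∀ θ : Y, μ {θ} = 0)
    (hcover : ∀ p : Y × Y, p.1 ≠ p.2 → ∃ β, p ∈ A β)
    (hdisj : Pairwise (Function.onFun Disjoint A))
    (hprod : ∀ β, (μ.prod μ) (A β) ≤ mc β * mc β)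
    (hsum : ∀ n : ℕ, ∑' β : {b : B // len b = n}, mc (β : B) ≤ 1)
    (htrans : ∀ β, ∀ p ∈ A β, ∀ r : ℝ, 0 < r →
      LebT {t | |π t p.1 - π t p.2| ≤ r}
        ≤ ENNReal.ofReal (C * r / w β ^ ((1 : ℝ) + ε₀ / 4)))
    (hgibbs : ∀ β, mc β
        ≤ ENNReal.ofReal (c ^ (x - 1) * lam ^ ((len β : ℝ) * x)
            * w β ^ ((1 : ℝ) + ε₀ / 4))) :
    Filter.liminf
      (fun r : ℝ =>
        (∫⁻ t, ∫⁻ θ, μ {τ | |π t θ - π t τ| ≤ r} ∂μ ∂LebT) / ENNReal.ofReal (2 * r))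
      (nhdsWithin 0 (Set.Ioi 0))
    ≤ ENNReal.ofReal ((C / 2) * c ^ (x - 1) * ∑' n : ℕ, lam ^ ((n : ℝ) * x)) := by
  have hc0 : (0:ℝ) < c := lt_trans one_pos hc
  have hcx : (0:ℝ) ≤ c ^ (x - 1) := Real.rpow_nonneg hc0.le _
  have hlamnn : ∀ n : ℕ, (0:ℝ) ≤ lam ^ ((n : ℝ) * x) :=
    fun n => Real.rpow_nonneg hlam0.le _
  have hsummable : Summable (fun n : ℕ => lam ^ ((n : ℝ) * x)) := by
    have heq : (fun n : ℕ => lam ^ ((n : ℝ) * x)) = fun n : ℕ => (lam ^ x) ^ n := by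
      funext n
      rw [mul_comm, Real.rpow_mul hlam0.le, Real.rpow_natCast]
    rw [heq]
    exact summable_geometric_of_lt_one (Real.rpow_nonneg hlam0.le x)
      (Real.rpow_lt_one hlam0.le hlam1 hx)
  set S : ℝ := ∑' n : ℕ, lam ^ ((n : ℝ) * x) with hS
  have hS0 : 0 ≤ S := tsum_nonneg hlamnn
  -- the bound holds for every r > 0
  refine liminf_le_of_frequently_le (Filter.Eventually.frequently ?_) (by isBoundedDefault)
  filter_upwards [self_mem_nhdsWithin] with r hr
  have hr0 : (0:ℝ) < r := hr
  set e : ℝ := (1 : ℝ) + ε₀ / 4 with he_def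
  have hwe : ∀ β, (0:ℝ) < w β ^ e := fun β => Real.rpow_pos_of_pos (hw β) e
  -- measurability of the joint set
  have hmeasg : Measurable (fun q : T × (Y × Y) => |π q.1 q.2.1 - π q.1 q.2.2|) := by
    apply Measurable.abs
    exact ((hπ.comp (measurable_fst.prodMk (measurable_fst.comp measurable_snd))).sub
      (hπ.comp (measurable_fst.prodMk (measurable_snd.comp measurable_snd))))
  have hE : MeasurableSet {q : T × (Y × Y) | |π q.1 q.2.1 - π q.1 q.2.2| ≤ r} :=
    measurableSet_le hmeasg measurable_const
  set f : Y × Y → ENNReal := fun p => LebT {t | |π t p.1 - π t p.2| ≤ r} with hf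
  -- Step 1: Fubini
  have step1 : (∫⁻ t, ∫⁻ θ, μ {τ | |π t θ - π t τ| ≤ r} ∂μ ∂LebT)
      = ∫⁻ p, f p ∂(μ.prod μ) := by
    have h1 : ∀ t, (∫⁻ θ, μ {τ | |π t θ - π t τ| ≤ r} ∂μ)
        = (μ.prod μ) (Prod.mk t ⁻¹' {q : T × (Y × Y) | |π q.1 q.2.1 - π q.1 q.2.2| ≤ r}) := by
      intro t
      rw [Measure.prod_apply (hE.preimage measurable_prodMk_left)]
      rfl
    simp_rw [h1]
    rw [← Measure.prod_apply hE, Measure.prod_apply_symm hE]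
    rfl
  -- Step 2: complement of the union is null
  set U : Set (Y × Y) := ⋃ β, A β with hU
  have hUm : MeasurableSet U := MeasurableSet.iUnion hA
  have hUc : (μ.prod μ) Uᶜ = 0 := by
    rw [Measure.prod_apply hUm.compl]
    have h0 : ∀ θ, μ (Prod.mk θ ⁻¹' U)ᶜ = 0 := by
      intro θ
      refine measure_mono_null ?_ (hatomless θ)
      intro τ hτ
      have hne : ¬ ((θ, τ).1 ≠ (θ, τ).2) := by
        intro hcontra
        exact hτ (Set.mem_iUnion.2 (hcover (θ, τ) hcontra))
      simp only [ne_eq, not_not] at hne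
      simp [← hne]
    simp [h0]
  have step2 : ∫⁻ p, f p ∂(μ.prod μ) = ∑' β, ∫⁻ p in A β, f p ∂(μ.prod μ) := by
    rw [← lintegral_add_compl f hUm, setLIntegral_measure_zero _ _ hUc, add_zero,
      lintegral_iUnion hA hdisj]
  -- Step 3: bound on each piece
  have step3 : ∀ β, ∫⁻ p in A β, f p ∂(μ.prod μ)
      ≤ mc β * ENNReal.ofReal (C * r * c ^ (x - 1) * lam ^ ((len β : ℝ) * x)) := by
    intro β
    have hb : ∫⁻ p in A β, f p ∂(μ.prod μ)
        ≤ ∫⁻ _ in A β, ENNReal.ofReal (C * r / w β ^ e) ∂(μ.prod μ) := by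
      refine setLIntegral_mono' (hA β) (fun p hp => ?_)
      exact htrans β p hp r hr0
    have hb2 : ∫⁻ _ in A β, ENNReal.ofReal (C * r / w β ^ e) ∂(μ.prod μ)
        = ENNReal.ofReal (C * r / w β ^ e) * (μ.prod μ) (A β) := setLIntegral_const _ _
    calc ∫⁻ p in A β, f p ∂(μ.prod μ)
        ≤ ENNReal.ofReal (C * r / w β ^ e) * (μ.prod μ) (A β) := by rw [← hb2]; exact hb
      _ ≤ ENNReal.ofReal (C * r / w β ^ e) * (mc β * mc β) :=
          mul_le_mul_right (hprod β) _
      _ ≤ ENNReal.ofReal (C * r / w β ^ e)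
            * (mc β * ENNReal.ofReal (c ^ (x - 1) * lam ^ ((len β : ℝ) * x) * w β ^ e)) :=
          mul_le_mul_right (mul_le_mul_right (hgibbs β) _) _
      _ = mc β * (ENNReal.ofReal (C * r / w β ^ e)
            * ENNReal.ofReal (c ^ (x - 1) * lam ^ ((len β : ℝ) * x) * w β ^ e)) := by ring
      _ = mc β * ENNReal.ofReal (C * r * c ^ (x - 1) * lam ^ ((len β : ℝ) * x)) := by
          rw [← ENNReal.ofReal_mul (div_nonneg (by positivity) (hwe β).le)]
          congr 1
          have hne : w β ^ e ≠ 0 := (hwe β).ne'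
          have hrw : C * r / w β ^ e * (c ^ (x - 1) * lam ^ ((len β : ℝ) * x) * w β ^ e)
              = C * r * c ^ (x - 1) * lam ^ ((len β : ℝ) * x) * (w β ^ e / w β ^ e) := by
            ring
          rw [hrw, div_self hne, mul_one]
  -- Step 4: sum over β
  have step4 : (∑' β, ∫⁻ p in A β, f p ∂(μ.prod μ))
      ≤ ∑' n : ℕ, ENNReal.ofReal (C * r * c ^ (x - 1) * lam ^ ((n : ℝ) * x)) := by
    calc (∑' β, ∫⁻ p in A β, f p ∂(μ.prod μ))
        ≤ ∑' β, mc β * ENNReal.ofReal (C * r * c ^ (x - 1) * lam ^ ((len β : ℝ) * x)) :=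
          ENNReal.tsum_le_tsum step3
      _ = ∑' (n : ℕ) (β : {b : B // len b = n}),
            mc (β : B) * ENNReal.ofReal (C * r * c ^ (x - 1) * lam ^ ((n : ℝ) * x)) := by
          rw [← (Equiv.sigmaFiberEquiv len).tsum_eq, ENNReal.tsum_sigma']
          refine tsum_congr fun n => tsum_congr fun β => ?_
          simp [Equiv.sigmaFiberEquiv, β.2]
      _ = ∑' (n : ℕ), (∑' (β : {b : B // len b = n}), mc (β : B))
            * ENNReal.ofReal (C * r * c ^ (x - 1) * lam ^ ((n : ℝ) * x)) := by
          refine tsum_congr fun n => ?_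
          rw [ENNReal.tsum_mul_right]
      _ ≤ ∑' (n : ℕ), 1 * ENNReal.ofReal (C * r * c ^ (x - 1) * lam ^ ((n : ℝ) * x)) :=
          ENNReal.tsum_le_tsum fun n => mul_le_mul_left (hsum n) _
      _ = ∑' n : ℕ, ENNReal.ofReal (C * r * c ^ (x - 1) * lam ^ ((n : ℝ) * x)) := by
          simp
  -- Step 5: compute the sum
  have step5 : (∑' n : ℕ, ENNReal.ofReal (C * r * c ^ (x - 1) * lam ^ ((n : ℝ) * x)))
      = ENNReal.ofReal (C * r * c ^ (x - 1) * S) := by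
    calc (∑' n : ℕ, ENNReal.ofReal (C * r * c ^ (x - 1) * lam ^ ((n : ℝ) * x)))
        = ∑' n : ℕ, ENNReal.ofReal (C * r * c ^ (x - 1))
            * ENNReal.ofReal (lam ^ ((n : ℝ) * x)) := by
          refine tsum_congr fun n => ?_
          rw [← ENNReal.ofReal_mul (by positivity)]
      _ = ENNReal.ofReal (C * r * c ^ (x - 1)) * ∑' n : ℕ,
            ENNReal.ofReal (lam ^ ((n : ℝ) * x)) := ENNReal.tsum_mul_left
      _ = ENNReal.ofReal (C * r * c ^ (x - 1)) * ENNReal.ofReal S := by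
          rw [← ENNReal.ofReal_tsum_of_nonneg hlamnn hsummable]
      _ = ENNReal.ofReal (C * r * c ^ (x - 1) * S) := by
          rw [← ENNReal.ofReal_mul (by positivity)]
  -- put everything together and divide
  have htotal : (∫⁻ t, ∫⁻ θ, μ {τ | |π t θ - π t τ| ≤ r} ∂μ ∂LebT)
      ≤ ENNReal.ofReal (C * r * c ^ (x - 1) * S) := by
    rw [step1, step2, ← step5]; exact step4
  calc (∫⁻ t, ∫⁻ θ, μ {τ | |π t θ - π t τ| ≤ r} ∂μ ∂LebT) / ENNReal.ofReal (2 * r)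
      ≤ ENNReal.ofReal (C * r * c ^ (x - 1) * S) / ENNReal.ofReal (2 * r) :=
        ENNReal.div_le_div_right htotal _
    _ = ENNReal.ofReal (C * r * c ^ (x - 1) * S / (2 * r)) :=
        (ENNReal.ofReal_div_of_pos (by positivity)).symm
    _ = ENNReal.ofReal ((C / 2) * c ^ (x - 1) * S) := by
        congr 1
        have h2r : (2 * r) ≠ 0 := by positivity
        rw [show C * r * c ^ (x - 1) * S = C / 2 * c ^ (x - 1) * S * (2 * r) by ring,
          mul_div_assoc, div_self h2r, mul_one]
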